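/- Let p, m, r ∈ ℕ with r ≥ 1, and let G be an rp × rm real block matrix with blocks G_{ij} ∈ ℝ^{p×m} for 1 ≤ i, j ≤ r, such that G_{ij} = 0 whenever i + j ≤ r and each anti-diagonal block G_{i, r+1−i} has rank p (full row rank). Then G has rank rp; equivalently, G Gᵀ ∈ ℝ^{rp×rp} is invertible. -/
import Mathlib

open Matrix

lemma vecMul_inj_of_rank {p m : ℕ} (M : Matrix (Fin p) (Fin m) ℝ) (h : M.rank = p)
    (w : Fin p → ℝ) (hw : w ᵥ* M = 0) : w = 0 := by
  have hMt : (Mᵀ).rank = p := by rw [Matrix.rank_transpose]; exact h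
  have hrange : Module.finrank ℝ (LinearMap.range (Mᵀ).mulVecLin) = p := hMt
  have hsum := LinearMap.finrank_range_add_finrank_ker (Mᵀ).mulVecLin
  have hdom : Module.finrank ℝ (Fin p → ℝ) = p := by simp
  have hker : Module.finrank ℝ (LinearMap.ker (Mᵀ).mulVecLin) = 0 := by omega
  have hkbot : LinearMap.ker (Mᵀ).mulVecLin = ⊥ :=
    Submodule.finrank_eq_zero.mp hker
  have hinj := LinearMap.ker_eq_bot.mp hkbot
  have h0 : (Mᵀ).mulVecLin w = (Mᵀ).mulVecLin 0 := by
    simp [Matrix.mulVecLin_apply, Matrix.mulVec_transpose, hw]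
  exact hinj h0

theorem stmt2 (p m r : ℕ) (hr : 1 ≤ r)
    (Gblk : Fin r → Fin r → Matrix (Fin p) (Fin m) ℝ)
    (hzero : ∀ i j : Fin r, (i : ℕ) + (j : ℕ) + 2 ≤ r → Gblk i j = 0)
    (hanti : ∀ i j : Fin r, (i : ℕ) + (j : ℕ) + 1 = r → (Gblk i j).rank = p) :
    let G : Matrix (Fin r × Fin p) (Fin r × Fin m) ℝ :=
      Matrix.of fun iq jq => Gblk iq.1 jq.1 iq.2 jq.2
    G.rank = r * p ∧ IsUnit (G * Gᵀ) := by
  intro G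
  -- key: left null space of G is trivial
  have key : ∀ v : Fin r × Fin p → ℝ, v ᵥ* G = 0 → v = 0 := by
    intro v hv
    have main : ∀ t : ℕ, ∀ i : Fin r, (i : ℕ) + t + 1 = r → ∀ s, v (i, s) = 0 := by
      intro t
      induction t using Nat.strong_induction_on with
      | _ t IH =>
        intro i hi s
        have ht : t < r := by omega
        set j : Fin r := ⟨t, ht⟩ with hj
        have hcol : (fun s' => v (i, s')) ᵥ* Gblk i j = 0 := by
          funext q'
          have h0 : (v ᵥ* G) (j, q') = 0 := by rw [hv]; rfl
          have hsum : ∑ x : Fin r × Fin p, v x * Gblk x.1 j x.2 q' = 0 := h0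
          rw [Fintype.sum_prod_type] at hsum
          have heach : ∀ i' : Fin r, i' ≠ i →
              ∑ s' : Fin p, v (i', s') * Gblk i' j s' q' = 0 := by
            intro i' hne
            rcases lt_or_gt_of_ne (fun h => hne (Fin.ext (by omega)) :
                (i' : ℕ) ≠ (i : ℕ)) with hlt | hgt
            · have : Gblk i' j = 0 := hzero i' j (by simp [hj]; omega)
              simp [this]
            · have hz : ∀ s', v (i', s') = 0 := by
                intro s'
                have hile : (i' : ℕ) ≤ r - 1 := by omega
                exact IH (r - 1 - (i' : ℕ)) (by omega) i' (by omega) s'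
              simp [hz]
          rw [Finset.sum_eq_single i (fun i' _ hne => heach i' hne)
            (fun h => absurd (Finset.mem_univ i) h)] at hsum
          simpa [Matrix.vecMul, dotProduct] using hsum
        have hrank : (Gblk i j).rank = p := hanti i j (by simp [hj]; omega)
        have := vecMul_inj_of_rank (Gblk i j) hrank _ hcol
        exact congrFun this s
    funext x
    obtain ⟨i, s⟩ := x
    have hile : (i : ℕ) ≤ r - 1 := by omega
    exact main (r - 1 - (i : ℕ)) i (by omega) s
  have hunit : IsUnit (G * Gᵀ) := by
    rw [Matrix.isUnit_iff_isUnit_det]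
    by_contra hdet
    have hdet0 : (G * Gᵀ).det = 0 := by
      by_contra h; exact hdet (isUnit_iff_ne_zero.mpr h)
    obtain ⟨w, hw0, hw⟩ := (Matrix.exists_mulVec_eq_zero_iff (A := ℝ)).mpr hdet0
    have hdp : w ⬝ᵥ ((G * Gᵀ) *ᵥ w) = 0 := by rw [hw]; simp
    rw [← Matrix.mulVec_mulVec, Matrix.dotProduct_mulVec, Matrix.mulVec_transpose] at hdp
    have hwG : w ᵥ* G = 0 := dotProduct_self_eq_zero.mp hdp
    exact hw0 (key w hwG)
  refine ⟨?_, hunit⟩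
  have h1 : (G * Gᵀ).rank = G.rank := Matrix.rank_self_mul_transpose G
  have h2 : (G * Gᵀ).rank = Fintype.card (Fin r × Fin p) := Matrix.rank_of_isUnit _ hunit
  rw [← h1, h2]; simp
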